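/- Let 𝒜 be a skeletally small abelian category, let X be a subobject bicomplete object of 𝒜, and let Δ be a subobject chain of X. Then the set Δ̄ = {colim Γ : Γ ⊆ Δ} ∪ {lim Γ : Γ ⊆ Δ} is a bicomplete subobject chain of X which refines Δ, and every bicomplete subobject chain Δ' of X refining Δ also refines Δ̄ (i.e., Δ̄ ⊆ Δ'). The analogous statement holds with 'bicomplete' replaced throughout by 'cocomplete' (taking Δ̄ = {colim Γ : Γ ⊆ Δ}) and with 'bicomplete' replaced throughout by 'complete' (taking Δ̄ = {lim Γ : Γ ⊆ Δ}), with 'subobject bicomplete' replaced by 'subobject cocomplete' and 'subobject complete' respectively. -/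

import Mathlib

open CategoryTheory CategoryTheory.Limits

universe w v u

namespace JHS

variable {𝒜 : Type u} [Category.{v} 𝒜] [Abelian 𝒜]

variable {X : 𝒜}

/-- The diagram in `𝒜` associated to a set of subobjects of `X`, given by the underlying
objects and the canonical inclusion monomorphisms between them. -/
@[simps]
noncomputable def chainDiagram (Δ : Set (Subobject X)) : Δ ⥤ 𝒜 where
  obj Y := (Y.1 : 𝒜)
  map {Y Z} f := Subobject.ofLE Y.1 Z.1 (leOfHom f)
  map_id Y := Subobject.ofLE_refl Y.1
  map_comp {Y Z W} f g := (Subobject.ofLE_comp_ofLE Y.1 Z.1 W.1 (leOfHom f) (leOfHom g)).symm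

/-- The cocone over the diagram of a set of subobjects of `X` with vertex an upper bound. -/
@[simps]
noncomputable def chainCocone (Δ : Set (Subobject X)) (W : Subobject X) (h : ∀ Y ∈ Δ, Y ≤ W) :
    Cocone (chainDiagram Δ) where
  pt := (W : 𝒜)
  ι :=
    { app := fun Y => Subobject.ofLE Y.1 W (h Y.1 Y.2)
      naturality := fun Y Z f => by
        simp [chainDiagram, Subobject.ofLE_comp_ofLE] }

/-- The cone over the diagram of a set of subobjects of `X` with vertex a lower bound. -/
@[simps]
noncomputable def chainCone (Δ : Set (Subobject X)) (W : Subobject X) (h : ∀ Y ∈ Δ, W ≤ Y) :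
    Cone (chainDiagram Δ) where
  pt := (W : 𝒜)
  π :=
    { app := fun Y => Subobject.ofLE W Y.1 (h Y.1 Y.2)
      naturality := fun Y Z f => by
        simp [chainDiagram, Subobject.ofLE_comp_ofLE] }

/-- `W` is the colimit of the chain `Δ` of subobjects of `X`, as a subobject of `X`:
the colimit of the diagram of inclusions exists and the induced morphism to `X` is a
monomorphism with image `W`.  Equivalently, the canonical cocone with vertex `W` is a
colimit cocone. -/
def IsColimSub (Δ : Set (Subobject X)) (W : Subobject X) : Prop :=
  ∃ h : ∀ Y ∈ Δ, Y ≤ W, Nonempty (IsColimit (chainCocone Δ W h))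

/-- `W` is the limit of the chain `Δ` of subobjects of `X` (such a limit is automatically a
subobject of `X`): the canonical cone with vertex `W` is a limit cone. -/
def IsLimSub (Δ : Set (Subobject X)) (W : Subobject X) : Prop :=
  ∃ h : ∀ Y ∈ Δ, W ≤ Y, Nonempty (IsLimit (chainCone Δ W h))

/-- A pre-subobject chain: a set of subobjects totally ordered under inclusion. -/
def IsPreChain (Δ : Set (Subobject X)) : Prop :=
  IsChain (· ≤ ·) Δ

/-- A subobject chain: a pre-subobject chain containing `⊥ = 0` and `⊤ = X`. -/
def IsSubChain (Δ : Set (Subobject X)) : Prop :=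
  IsPreChain Δ ∧ ⊥ ∈ Δ ∧ ⊤ ∈ Δ

/-- A chain is cocomplete if every subset has a colimit which is a subobject of `X` and
lies in the chain. -/
def Cocomplete (Δ : Set (Subobject X)) : Prop :=
  ∀ Δ' ⊆ Δ, ∃ W ∈ Δ, IsColimSub Δ' W

/-- A chain is complete if every subset has a limit which lies in the chain. -/
def Complete (Δ : Set (Subobject X)) : Prop :=
  ∀ Δ' ⊆ Δ, ∃ W ∈ Δ, IsLimSub Δ' W

/-- A chain is bicomplete if it is both cocomplete and complete. -/
def Bicomplete (Δ : Set (Subobject X)) : Prop :=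
  Cocomplete Δ ∧ Complete Δ

/-- `W = Y⁻_Δ` is the predecessor of `Y` in `Δ`: the colimit of `{Z ∈ Δ | Z ⊊ Y}`,
with the convention `0⁻_Δ = 0`. -/
def IsPred (Δ : Set (Subobject X)) (Y W : Subobject X) : Prop :=
  (Y = ⊥ ∧ W = ⊥) ∨ (Y ≠ ⊥ ∧ IsColimSub {Z | Z ∈ Δ ∧ Z < Y} W)

/-- `W = Y⁺_Δ` is the successor of `Y` in `Δ`: the limit of `{Z ∈ Δ | Y ⊊ Z}`,
with the convention `X⁺_Δ = X`. -/
def IsSucc (Δ : Set (Subobject X)) (Y W : Subobject X) : Prop :=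
  (Y = ⊤ ∧ W = ⊤) ∨ (Y ≠ ⊤ ∧ IsLimSub {Z | Z ∈ Δ ∧ Y < Z} W)

/-- The quotient (subfactor) `Y/W` of two nested subobjects of `X`: the cokernel of the
inclusion `W → Y`. -/
noncomputable def quot (W Y : Subobject X) (h : W ≤ Y) : 𝒜 :=
  cokernel (Subobject.ofLE W Y h)

/-- A composition series of `X`: a bicomplete subobject chain all of whose subfactors
`Y/Y⁻_Δ` (for `Y ∈ Δ` with `Y ≠ Y⁻_Δ`) are simple. -/
def IsCompSeries (Δ : Set (Subobject X)) : Prop :=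
  IsSubChain Δ ∧ Bicomplete Δ ∧
    ∀ Y ∈ Δ, ∀ (W) (h : W ≤ Y), IsPred Δ Y W → W ≠ Y → Simple (quot W Y h)

variable (X) in
/-- Axiom (JHS1): `X` is subobject cocomplete. -/
def JHS1 : Prop :=
  ∀ Δ : Set (Subobject X), IsPreChain Δ → ∃ W, IsColimSub Δ W

variable (X) in
/-- Axiom (JHS2): `X` is subobject complete. -/
def JHS2 : Prop :=
  ∀ Δ : Set (Subobject X), IsPreChain Δ → ∃ W, IsLimSub Δ W

variable (X) in
/-- Axiom (JHS3). -/
def JHS3 : Prop :=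
  JHS1 X ∧ ∀ (Δ : Set (Subobject X)) (Z W : Subobject X),
    IsPreChain Δ → IsColimSub Δ W → IsColimSub ((· ⊓ Z) '' Δ) (W ⊓ Z)

variable (X) in
/-- Axiom (JHS4). -/
def JHS4 : Prop :=
  JHS2 X ∧ ∀ (Δ : Set (Subobject X)) (Z W : Subobject X),
    IsPreChain Δ → IsLimSub Δ W → IsLimSub ((· ⊔ Z) '' Δ) (W ⊔ Z)

variable (X) in
/-- `X` is weakly Jordan–Hölder–Schreier. -/
def WeaklyJHS : Prop :=
  JHS3 X ∧ JHS4 X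

variable (X) in
/-- Axiom (JHS5): if `X ≠ 0`, every composition series of `X` has a nonempty subfactor
multiset. -/
def JHS5 : Prop :=
  ¬ IsZero X → ∀ Δ : Set (Subobject X), IsCompSeries Δ →
    ∃ Y ∈ Δ, ∃ W, IsPred Δ Y W ∧ W ≠ Y

variable (X) in
/-- `X` is Jordan–Hölder–Schreier. -/
def IsJHS : Prop :=
  WeaklyJHS X ∧ JHS5 X

/-- The index set of the lower subfactor multiset `sf⁻(Δ)`: elements `Y ∈ Δ` admitting a
predecessor `Y⁻_Δ ≠ Y`. -/
def lowerIdx (Δ : Set (Subobject X)) : Type _ :=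
  {Y : Subobject X // Y ∈ Δ ∧ ∃ W, IsPred Δ Y W ∧ W ≠ Y}

/-- The index set of the upper subfactor multiset `sf⁺(Δ)`: elements `Y ∈ Δ` admitting a
successor `Y⁺_Δ ≠ Y`. -/
def upperIdx (Δ : Set (Subobject X)) : Type _ :=
  {Y : Subobject X // Y ∈ Δ ∧ ∃ W, IsSucc Δ Y W ∧ W ≠ Y}

/-- Subfactor equivalence of two chains: a bijection of the index sets of their subfactor
multisets under which corresponding subfactors are isomorphic. -/
def SubfactorEquiv (Δ Γ : Set (Subobject X)) : Prop :=
  ∃ e : lowerIdx Δ ≃ lowerIdx Γ,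
    ∀ (Y : lowerIdx Δ) (W : Subobject X) (hW : W ≤ Y.1) (V : Subobject X)
      (hV : V ≤ (e Y).1),
      IsPred Δ Y.1 W → IsPred Γ (e Y).1 V →
      Nonempty (quot W Y.1 hW ≅ quot V (e Y).1 hV)

/-- The lower conflation `con⁻(Δ, Γ)`. -/
def conLower (Δ Γ : Set (Subobject X)) : Set (Subobject X) :=
  Δ ∪ {V | ∃ Y ∈ Δ, ∃ Z ∈ Γ, ∃ W, IsPred Δ Y W ∧ V = W ⊔ (Y ⊓ Z)}

/-- The upper conflation `con⁺(Δ, Γ)`. -/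
def conUpper (Δ Γ : Set (Subobject X)) : Set (Subobject X) :=
  Δ ∪ {V | ∃ Y ∈ Δ, ∃ Z ∈ Γ, ∃ W, IsSucc Δ Y W ∧ V = Y ⊔ (W ⊓ Z)}


section Statement9Aux

set_option linter.unusedSectionVars false

theorem bound_of_isColimSub {Γ : Set (Subobject X)} {W : Subobject X}
    (h : IsColimSub Γ W) : ∀ Y ∈ Γ, Y ≤ W := h.choose

theorem bound_of_isLimSub {Γ : Set (Subobject X)} {W : Subobject X}
    (h : IsLimSub Γ W) : ∀ Y ∈ Γ, W ≤ Y := h.choose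

/-- A colimit subobject of a set of subobjects is a least upper bound. -/
theorem le_of_isColimSub {Γ : Set (Subobject X)} {W : Subobject X}
    (h : IsColimSub Γ W) {W' : Subobject X} (hW' : ∀ Y ∈ Γ, Y ≤ W') : W ≤ W' := by
  obtain ⟨hb, ⟨hc⟩⟩ := h
  refine Subobject.le_of_comm (hc.desc (chainCocone Γ W' hW')) ?_
  apply hc.hom_ext
  intro Y
  erw [← Category.assoc, hc.fac]
  simp [Subobject.ofLE_arrow]
  erw [Subobject.ofLE_arrow, Subobject.ofLE_arrow]

/-- A limit subobject of a nonempty set of subobjects is a greatest lower bound. -/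
theorem le_of_isLimSub {Γ : Set (Subobject X)} {W : Subobject X}
    (h : IsLimSub Γ W) (hne : Γ.Nonempty) {W' : Subobject X}
    (hW' : ∀ Y ∈ Γ, W' ≤ Y) : W' ≤ W := by
  obtain ⟨hb, ⟨hc⟩⟩ := h
  refine Subobject.le_of_comm (hc.lift (chainCone Γ W' hW')) ?_
  obtain ⟨Y, hY⟩ := hne
  have hfac := hc.fac (chainCone Γ W' hW') ⟨Y, hY⟩
  simp only [chainCone_π_app] at hfac
  erw [← Subobject.ofLE_arrow (hb Y hY), ← Category.assoc, hfac, Subobject.ofLE_arrow]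

theorem isLimSub_empty {W : Subobject X} (h : IsLimSub (∅ : Set (Subobject X)) W) : W = ⊥ := by
  obtain ⟨hb, ⟨hc⟩⟩ := h
  have hzero : IsZero (W : 𝒜) := by
    rw [IsZero.iff_id_eq_zero]
    have h1 := hc.uniq (chainCone ∅ W hb) (𝟙 _) (fun Y => (Set.notMem_empty _ Y.2).elim)
    have h2 := hc.uniq (chainCone ∅ W hb) 0 (fun Y => (Set.notMem_empty _ Y.2).elim)
    exact h1.trans h2.symm
  refine le_antisymm (Subobject.le_of_comm 0 ?_) bot_le
  rw [zero_comp, hzero.eq_zero_of_src W.arrow]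

theorem isColimSub_singleton (Y : Subobject X) : IsColimSub {Y} Y := by
  refine ⟨fun Z hZ => le_of_eq hZ, ⟨?_⟩⟩
  refine { desc := fun s => s.ι.app ⟨Y, rfl⟩, fac := ?_, uniq := ?_ }
  · rintro s ⟨Z, hZ⟩
    rcases hZ with rfl
    simp [Subobject.ofLE_refl]
    exact Category.id_comp _
  · intro s m w
    have := w ⟨Y, rfl⟩
    simp [Subobject.ofLE_refl] at this
    exact (Category.id_comp m).symm.trans this

theorem isLimSub_singleton (Y : Subobject X) : IsLimSub {Y} Y := by
  refine ⟨fun Z hZ => le_of_eq hZ.symm, ⟨?_⟩⟩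
  refine { lift := fun s => s.π.app ⟨Y, rfl⟩, fac := ?_, uniq := ?_ }
  · rintro s ⟨Z, hZ⟩
    rcases hZ with rfl
    simp [Subobject.ofLE_refl]
    exact Category.comp_id _
  · intro s m w
    have := w ⟨Y, rfl⟩
    simp [Subobject.ofLE_refl] at this
    exact (Category.comp_id m).symm.trans this

theorem colimSub_unique {Γ : Set (Subobject X)} {W W' : Subobject X}
    (h : IsColimSub Γ W) (h' : IsColimSub Γ W') : W = W' :=
  le_antisymm (le_of_isColimSub h (bound_of_isColimSub h'))
    (le_of_isColimSub h' (bound_of_isColimSub h))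

theorem limSub_unique {Γ : Set (Subobject X)} {W W' : Subobject X}
    (h : IsLimSub Γ W) (h' : IsLimSub Γ W') : W = W' := by
  rcases Γ.eq_empty_or_nonempty with rfl | hne
  · rw [isLimSub_empty h, isLimSub_empty h']
  · exact le_antisymm (le_of_isLimSub h' hne (bound_of_isLimSub h))
      (le_of_isLimSub h hne (bound_of_isLimSub h'))

theorem comp_colim_colim {Δ Γ1 Γ2 : Set (Subobject X)} {W1 W2 : Subobject X}
    (hΔ : IsPreChain Δ) (h1 : Γ1 ⊆ Δ) (h2 : Γ2 ⊆ Δ)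
    (hW1 : IsColimSub Γ1 W1) (hW2 : IsColimSub Γ2 W2) : W1 ≤ W2 ∨ W2 ≤ W1 := by
  by_cases h : ∀ Y ∈ Γ1, Y ≤ W2
  · exact Or.inl (le_of_isColimSub hW1 h)
  · push_neg at h
    obtain ⟨Y, hY, hYW2⟩ := h
    refine Or.inr (le_of_isColimSub hW2 fun Z hZ => ?_)
    rcases eq_or_ne Z Y with rfl | hne
    · exact bound_of_isColimSub hW1 Z hY
    rcases hΔ (h2 hZ) (h1 hY) hne with hZY | hYZ
    · exact hZY.trans (bound_of_isColimSub hW1 Y hY)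
    · exact absurd (hYZ.trans (bound_of_isColimSub hW2 Z hZ)) hYW2

theorem comp_lim_lim {Δ Γ1 Γ2 : Set (Subobject X)} {W1 W2 : Subobject X}
    (hΔ : IsPreChain Δ) (h1 : Γ1 ⊆ Δ) (h2 : Γ2 ⊆ Δ)
    (hW1 : IsLimSub Γ1 W1) (hW2 : IsLimSub Γ2 W2) : W1 ≤ W2 ∨ W2 ≤ W1 := by
  rcases Γ1.eq_empty_or_nonempty with rfl | hne1
  · rw [isLimSub_empty hW1]; exact Or.inl bot_le
  rcases Γ2.eq_empty_or_nonempty with rfl | hne2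
  · rw [isLimSub_empty hW2]; exact Or.inr bot_le
  by_cases h : ∀ Y ∈ Γ1, W2 ≤ Y
  · exact Or.inr (le_of_isLimSub hW1 hne1 h)
  · push_neg at h
    obtain ⟨Y, hY, hW2Y⟩ := h
    have hYlb : ∀ Z ∈ Γ2, Y ≤ Z := by
      intro Z hZ
      rcases eq_or_ne Y Z with rfl | hne
      · exact le_rfl
      rcases hΔ (h1 hY) (h2 hZ) hne with hYZ | hZY
      · exact hYZ
      · exact absurd ((bound_of_isLimSub hW2 Z hZ).trans hZY) hW2Y
    exact Or.inl ((bound_of_isLimSub hW1 Y hY).trans (le_of_isLimSub hW2 hne2 hYlb))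

theorem comp_colim_lim {Δ Γ1 Γ2 : Set (Subobject X)} {W1 W2 : Subobject X}
    (hΔ : IsPreChain Δ) (h1 : Γ1 ⊆ Δ) (h2 : Γ2 ⊆ Δ)
    (hW1 : IsColimSub Γ1 W1) (hW2 : IsLimSub Γ2 W2) : W1 ≤ W2 ∨ W2 ≤ W1 := by
  rcases Γ2.eq_empty_or_nonempty with rfl | hne2
  · rw [isLimSub_empty hW2]; exact Or.inr bot_le
  by_cases h : ∃ Y ∈ Γ1, ∃ Z ∈ Γ2, Z ≤ Y
  · obtain ⟨Y, hY, Z, hZ, hZY⟩ := h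
    exact Or.inr (((bound_of_isLimSub hW2 Z hZ).trans hZY).trans
      (bound_of_isColimSub hW1 Y hY))
  · push_neg at h
    refine Or.inl (le_of_isLimSub hW2 hne2 fun Z hZ => le_of_isColimSub hW1 fun Y hY => ?_)
    rcases eq_or_ne Y Z with rfl | hne
    · exact le_rfl
    rcases hΔ (h1 hY) (h2 hZ) hne with hYZ | hZY
    · exact hYZ
    · exact absurd hZY (h Y hY Z hZ)

theorem key_colim (hJ1 : JHS1 X) {Δ : Set (Subobject X)} (hΔ : IsSubChain Δ)
    {S : Set (Subobject X)} (hS : IsPreChain S) (hΔS : Δ ⊆ S)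
    (hmem : ∀ V ∈ S, (∃ Γ ⊆ Δ, IsColimSub Γ V) ∨ ∃ Γ ⊆ Δ, IsLimSub Γ V)
    {Δ'' : Set (Subobject X)} (hΔ'' : Δ'' ⊆ S) :
    ∃ W, IsColimSub Δ'' W ∧ (W ∈ Δ'' ∨ ∃ Γ ⊆ Δ, IsColimSub Γ W) := by
  obtain ⟨W, hW⟩ := hJ1 Δ'' (IsChain.mono hΔ'' hS)
  refine ⟨W, hW, ?_⟩
  by_cases hWmem : W ∈ Δ''
  · exact Or.inl hWmem
  right
  have hΓΔ : {Y | Y ∈ Δ ∧ Y ≤ W} ⊆ Δ := fun Y hY => hY.1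
  obtain ⟨W₀, hW₀⟩ := hJ1 {Y | Y ∈ Δ ∧ Y ≤ W} (IsChain.mono hΓΔ hΔ.1)
  have hle : W ≤ W₀ := by
    refine le_of_isColimSub hW fun V hV => ?_
    rcases hmem V (hΔ'' hV) with ⟨ΓV, hΓV, hcV⟩ | ⟨ΓV, hΓV, hlV⟩
    · refine le_of_isColimSub hcV fun Y hY => ?_
      exact bound_of_isColimSub hW₀ Y
        ⟨hΓV hY, (bound_of_isColimSub hcV Y hY).trans (bound_of_isColimSub hW V hV)⟩
    · rcases ΓV.eq_empty_or_nonempty with rfl | hneV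
      · rw [isLimSub_empty hlV]; exact bot_le
      by_cases hZW : ∃ Z ∈ ΓV, Z ≤ W
      · obtain ⟨Z, hZ, hZW'⟩ := hZW
        exact (bound_of_isLimSub hlV Z hZ).trans (bound_of_isColimSub hW₀ Z ⟨hΓV hZ, hZW'⟩)
      · push_neg at hZW
        exfalso
        have hWV : W ≤ V := by
          refine le_of_isLimSub hlV hneV fun Z hZ => ?_
          refine le_of_isColimSub hW fun V' hV' => ?_
          rcases eq_or_ne V' Z with rfl | hne
          · exact le_rfl
          rcases hS (hΔ'' hV') (hΔS (hΓV hZ)) hne with hV'Z | hZV'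
          · exact hV'Z
          · exact absurd (hZV'.trans (bound_of_isColimSub hW V' hV')) (hZW Z hZ)
        have hVW : V = W := le_antisymm (bound_of_isColimSub hW V hV) hWV
        exact hWmem (hVW ▸ hV)
  have hge : W₀ ≤ W := le_of_isColimSub hW₀ fun Y hY => hY.2
  exact ⟨{Y | Y ∈ Δ ∧ Y ≤ W}, hΓΔ, (le_antisymm hle hge).symm ▸ hW₀⟩

theorem key_lim (hJ2 : JHS2 X) {Δ : Set (Subobject X)} (hΔ : IsSubChain Δ)
    {S : Set (Subobject X)} (hS : IsPreChain S) (hΔS : Δ ⊆ S)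
    (hmem : ∀ V ∈ S, (∃ Γ ⊆ Δ, IsColimSub Γ V) ∨ ∃ Γ ⊆ Δ, IsLimSub Γ V)
    {Δ'' : Set (Subobject X)} (hΔ'' : Δ'' ⊆ S) :
    ∃ W, IsLimSub Δ'' W ∧ (W ∈ Δ'' ∨ ∃ Γ ⊆ Δ, IsLimSub Γ W) := by
  obtain ⟨W, hW⟩ := hJ2 Δ'' (IsChain.mono hΔ'' hS)
  refine ⟨W, hW, ?_⟩
  by_cases hWmem : W ∈ Δ''
  · exact Or.inl hWmem
  right
  rcases Δ''.eq_empty_or_nonempty with rfl | hne''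
  · exact ⟨{⊥}, Set.singleton_subset_iff.2 hΔ.2.1,
      by rw [isLimSub_empty hW]; exact isLimSub_singleton ⊥⟩
  have hΓΔ : {Y | Y ∈ Δ ∧ W ≤ Y} ⊆ Δ := fun Y hY => hY.1
  have hΓne : ({Y | Y ∈ Δ ∧ W ≤ Y} : Set (Subobject X)).Nonempty := ⟨⊤, hΔ.2.2, le_top⟩
  obtain ⟨W₀, hW₀⟩ := hJ2 {Y | Y ∈ Δ ∧ W ≤ Y} (IsChain.mono hΓΔ hΔ.1)
  have hle : W₀ ≤ W := by
    refine le_of_isLimSub hW hne'' fun V hV => ?_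
    rcases hmem V (hΔ'' hV) with ⟨ΓV, hΓV, hcV⟩ | ⟨ΓV, hΓV, hlV⟩
    · by_cases hZW : ∃ Z ∈ ΓV, W ≤ Z
      · obtain ⟨Z, hZ, hWZ⟩ := hZW
        exact (bound_of_isLimSub hW₀ Z ⟨hΓV hZ, hWZ⟩).trans (bound_of_isColimSub hcV Z hZ)
      · push_neg at hZW
        exfalso
        have hVW : V ≤ W := by
          refine le_of_isColimSub hcV fun Z hZ => ?_
          refine le_of_isLimSub hW hne'' fun V' hV' => ?_
          rcases eq_or_ne Z V' with rfl | hne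
          · exact le_rfl
          rcases hS (hΔS (hΓV hZ)) (hΔ'' hV') hne with hZV' | hV'Z
          · exact hZV'
          · exact absurd ((bound_of_isLimSub hW V' hV').trans hV'Z) (hZW Z hZ)
        have hVW' : V = W := le_antisymm hVW (bound_of_isLimSub hW V hV)
        exact hWmem (hVW' ▸ hV)
    · rcases ΓV.eq_empty_or_nonempty with rfl | hneV
      · have hVbot : V = ⊥ := isLimSub_empty hlV
        have hWbot : W ≤ ⊥ := by rw [← hVbot]; exact bound_of_isLimSub hW V hV
        rw [hVbot]
        exact bound_of_isLimSub hW₀ ⊥ ⟨hΔ.2.1, hWbot⟩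
      · refine le_of_isLimSub hlV hneV fun Z hZ => ?_
        exact bound_of_isLimSub hW₀ Z
          ⟨hΓV hZ, (bound_of_isLimSub hW V hV).trans (bound_of_isLimSub hlV Z hZ)⟩
  have hge : W ≤ W₀ := le_of_isLimSub hW₀ hΓne fun Y hY => hY.2
  exact ⟨{Y | Y ∈ Δ ∧ W ≤ Y}, hΓΔ, (le_antisymm hge hle).symm ▸ hW₀⟩

end Statement9Aux

/-- Proposition 3.13: the bicompletion (respectively cocompletion, completion) of a
subobject chain of a subobject bicomplete (respectively cocomplete, complete) object. -/
theorem statement9 [EssentiallySmall.{w} 𝒜] (X : 𝒜) (Δ : Set (Subobject X))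
    (hΔ : IsSubChain Δ) :
    (JHS1 X → JHS2 X →
      IsSubChain {W | (∃ Γ ⊆ Δ, IsColimSub Γ W) ∨ ∃ Γ ⊆ Δ, IsLimSub Γ W} ∧
      Bicomplete {W | (∃ Γ ⊆ Δ, IsColimSub Γ W) ∨ ∃ Γ ⊆ Δ, IsLimSub Γ W} ∧
      Δ ⊆ {W | (∃ Γ ⊆ Δ, IsColimSub Γ W) ∨ ∃ Γ ⊆ Δ, IsLimSub Γ W} ∧
      ∀ Δ' : Set (Subobject X), IsSubChain Δ' → Bicomplete Δ' → Δ ⊆ Δ' →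
        {W | (∃ Γ ⊆ Δ, IsColimSub Γ W) ∨ ∃ Γ ⊆ Δ, IsLimSub Γ W} ⊆ Δ') ∧
    (JHS1 X →
      IsSubChain {W | ∃ Γ ⊆ Δ, IsColimSub Γ W} ∧
      Cocomplete {W | ∃ Γ ⊆ Δ, IsColimSub Γ W} ∧
      Δ ⊆ {W | ∃ Γ ⊆ Δ, IsColimSub Γ W} ∧
      ∀ Δ' : Set (Subobject X), IsSubChain Δ' → Cocomplete Δ' → Δ ⊆ Δ' →
        {W | ∃ Γ ⊆ Δ, IsColimSub Γ W} ⊆ Δ') ∧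
    (JHS2 X →
      IsSubChain {W | ∃ Γ ⊆ Δ, IsLimSub Γ W} ∧
      Complete {W | ∃ Γ ⊆ Δ, IsLimSub Γ W} ∧
      Δ ⊆ {W | ∃ Γ ⊆ Δ, IsLimSub Γ W} ∧
      ∀ Δ' : Set (Subobject X), IsSubChain Δ' → Complete Δ' → Δ ⊆ Δ' →
        {W | ∃ Γ ⊆ Δ, IsLimSub Γ W} ⊆ Δ') := by
  constructor
  · -- bicomplete case
    intro hJ1 hJ2
    set S : Set (Subobject X) :=
      {W | (∃ Γ ⊆ Δ, IsColimSub Γ W) ∨ ∃ Γ ⊆ Δ, IsLimSub Γ W} with hSdef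
    have hrefine : Δ ⊆ S := fun Y hY =>
      Or.inl ⟨{Y}, Set.singleton_subset_iff.2 hY, isColimSub_singleton Y⟩
    have hchain : IsPreChain S := by
      intro W1 h1 W2 h2 _
      rcases h1 with ⟨Γ1, hΓ1, hc1⟩ | ⟨Γ1, hΓ1, hl1⟩ <;>
        rcases h2 with ⟨Γ2, hΓ2, hc2⟩ | ⟨Γ2, hΓ2, hl2⟩
      · exact comp_colim_colim hΔ.1 hΓ1 hΓ2 hc1 hc2
      · exact comp_colim_lim hΔ.1 hΓ1 hΓ2 hc1 hl2
      · exact (comp_colim_lim hΔ.1 hΓ2 hΓ1 hc2 hl1).symm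
      · exact comp_lim_lim hΔ.1 hΓ1 hΓ2 hl1 hl2
    have hmem : ∀ V ∈ S, (∃ Γ ⊆ Δ, IsColimSub Γ V) ∨ ∃ Γ ⊆ Δ, IsLimSub Γ V := fun V hV => hV
    refine ⟨⟨hchain, hrefine hΔ.2.1, hrefine hΔ.2.2⟩, ⟨?_, ?_⟩, hrefine, ?_⟩
    · intro Δ'' hΔ''
      obtain ⟨W, hWc, hcase⟩ := key_colim hJ1 hΔ hchain hrefine hmem hΔ''
      rcases hcase with hWmem | hWS
      · exact ⟨W, hΔ'' hWmem, hWc⟩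
      · exact ⟨W, Or.inl hWS, hWc⟩
    · intro Δ'' hΔ''
      obtain ⟨W, hWl, hcase⟩ := key_lim hJ2 hΔ hchain hrefine hmem hΔ''
      rcases hcase with hWmem | hWS
      · exact ⟨W, hΔ'' hWmem, hWl⟩
      · exact ⟨W, Or.inr hWS, hWl⟩
    · intro Δ' _ hbi hsub W hW
      rcases hW with ⟨Γ, hΓ, hc⟩ | ⟨Γ, hΓ, hl⟩
      · obtain ⟨W', hW', hc'⟩ := hbi.1 Γ (hΓ.trans hsub)
        exact colimSub_unique hc hc' ▸ hW'
      · obtain ⟨W', hW', hl'⟩ := hbi.2 Γ (hΓ.trans hsub)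
        exact limSub_unique hl hl' ▸ hW'
  constructor
  · -- cocomplete case
    intro hJ1
    set S : Set (Subobject X) := {W | ∃ Γ ⊆ Δ, IsColimSub Γ W} with hSdef
    have hrefine : Δ ⊆ S := fun Y hY =>
      ⟨{Y}, Set.singleton_subset_iff.2 hY, isColimSub_singleton Y⟩
    have hchain : IsPreChain S := by
      rintro W1 ⟨Γ1, hΓ1, hc1⟩ W2 ⟨Γ2, hΓ2, hc2⟩ _
      exact comp_colim_colim hΔ.1 hΓ1 hΓ2 hc1 hc2
    have hmem : ∀ V ∈ S, (∃ Γ ⊆ Δ, IsColimSub Γ V) ∨ ∃ Γ ⊆ Δ, IsLimSub Γ V :=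
      fun V hV => Or.inl hV
    refine ⟨⟨hchain, hrefine hΔ.2.1, hrefine hΔ.2.2⟩, ?_, hrefine, ?_⟩
    · intro Δ'' hΔ''
      obtain ⟨W, hWc, hcase⟩ := key_colim hJ1 hΔ hchain hrefine hmem hΔ''
      rcases hcase with hWmem | hWS
      · exact ⟨W, hΔ'' hWmem, hWc⟩
      · exact ⟨W, hWS, hWc⟩
    · intro Δ' _ hco hsub W hW
      obtain ⟨Γ, hΓ, hc⟩ := hW
      obtain ⟨W', hW', hc'⟩ := hco Γ (hΓ.trans hsub)
      exact colimSub_unique hc hc' ▸ hW'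
  · -- complete case
    intro hJ2
    set S : Set (Subobject X) := {W | ∃ Γ ⊆ Δ, IsLimSub Γ W} with hSdef
    have hrefine : Δ ⊆ S := fun Y hY =>
      ⟨{Y}, Set.singleton_subset_iff.2 hY, isLimSub_singleton Y⟩
    have hchain : IsPreChain S := by
      rintro W1 ⟨Γ1, hΓ1, hl1⟩ W2 ⟨Γ2, hΓ2, hl2⟩ _
      exact comp_lim_lim hΔ.1 hΓ1 hΓ2 hl1 hl2
    have hmem : ∀ V ∈ S, (∃ Γ ⊆ Δ, IsColimSub Γ V) ∨ ∃ Γ ⊆ Δ, IsLimSub Γ V :=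
      fun V hV => Or.inr hV
    refine ⟨⟨hchain, hrefine hΔ.2.1, hrefine hΔ.2.2⟩, ?_, hrefine, ?_⟩
    · intro Δ'' hΔ''
      obtain ⟨W, hWl, hcase⟩ := key_lim hJ2 hΔ hchain hrefine hmem hΔ''
      rcases hcase with hWmem | hWS
      · exact ⟨W, hΔ'' hWmem, hWl⟩
      · exact ⟨W, hWS, hWl⟩
    · intro Δ' _ hcm hsub W hW
      obtain ⟨Γ, hΓ, hl⟩ := hW
      obtain ⟨W', hW', hl'⟩ := hcm Γ (hΓ.trans hsub)
      exact limSub_unique hl hl' ▸ hW'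


end JHS
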